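/- Regard 𝓔 as a function of θ with d_ij and d_jk held fixed, and suppose the configuration is isosceles: d_jk = d and d_ki(θ*) = d for some θ* ∈ (0, π) (equivalently cos θ* = d_ij/(2d), requiring 2d > d_ij), with the equilibrium condition H² = I_H(θ*)²/d³. Then d²𝓔/dθ²(θ*) = m_k m_i (m_k(m_i − 3 m_j) d² − 3 m_i m_j d_ij² − 3 I_S)(d_ij sin θ*)²/(I_H(θ*) d³). If moreover m_j ≥ m_i, then this second derivative is strictly negative; hence the Isosceles relative equilibrium configurations are always energetically unstable in the angle θ. -/

import Mathlib

/-- Third side from the law of cosines. -/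
noncomputable def dki (dij djk θ : ℝ) : ℝ :=
  Real.sqrt (dij ^ 2 + djk ^ 2 - 2 * dij * djk * Real.cos θ)

/-- Moment of inertia about the rotation axis. -/
noncomputable def IH (mi mj mk IS dij djk θ : ℝ) : ℝ :=
  mi * mj * dij ^ 2 + mj * mk * djk ^ 2 + mk * mi * (dki dij djk θ) ^ 2 + IS

/-- The amended potential `𝓔 = H²/(2 I_H) + U` as a function of
`(d_ij, d_jk, θ)`. -/
noncomputable def amended (mi mj mk IS H dij djk θ : ℝ) : ℝ :=
  H ^ 2 / (2 * IH mi mj mk IS dij djk θ)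
    - (mi * mj / dij + mj * mk / djk + mk * mi / dki dij djk θ)

noncomputable def F1fun (mi mj mk IS H dij d : ℝ) : ℝ → ℝ := fun t =>
  -(H ^ 2 * (2 * mk * mi * dij * d * Real.sin t)) /
      (2 * (mi * mj * dij ^ 2 + mj * mk * d ^ 2 +
        mk * mi * (dij ^ 2 + d ^ 2 - 2 * dij * d * Real.cos t) + IS) ^ 2)
  + mk * mi * (dij * d * Real.sin t) /
      ((dij ^ 2 + d ^ 2 - 2 * dij * d * Real.cos t) *
        Real.sqrt (dij ^ 2 + d ^ 2 - 2 * dij * d * Real.cos t))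

lemma qpos {dij d : ℝ} (hdij : 0 < dij) (hd : 0 < d) {t : ℝ}
    (ht : t ∈ Set.Ioo 0 Real.pi) :
    0 < dij ^ 2 + d ^ 2 - 2 * dij * d * Real.cos t := by
  have hs : 0 < Real.sin t := Real.sin_pos_of_pos_of_lt_pi ht.1 ht.2
  have hp := Real.sin_sq_add_cos_sq t
  have hc1 : Real.cos t < 1 := by nlinarith [Real.neg_one_le_cos t]
  nlinarith [sq_nonneg (dij - d), mul_pos hdij hd]

lemma gpos {mi mj mk IS dij d : ℝ} (hmi : 0 < mi) (hmj : 0 < mj) (hmk : 0 < mk)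
    (hIS : 0 < IS) (hdij : 0 < dij) (hd : 0 < d) {t : ℝ}
    (ht : t ∈ Set.Ioo 0 Real.pi) :
    0 < mi * mj * dij ^ 2 + mj * mk * d ^ 2 +
      mk * mi * (dij ^ 2 + d ^ 2 - 2 * dij * d * Real.cos t) + IS := by
  have := qpos hdij hd ht
  have h1 : 0 < mk * mi * (dij ^ 2 + d ^ 2 - 2 * dij * d * Real.cos t) := by positivity
  positivity

lemma amended_eq (mi mj mk IS H dij d : ℝ) (hdij : 0 < dij) (hd : 0 < d) :
    (fun t => amended mi mj mk IS H dij d t) = fun t =>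
      H ^ 2 / (2 * (mi * mj * dij ^ 2 + mj * mk * d ^ 2 +
        mk * mi * (dij ^ 2 + d ^ 2 - 2 * dij * d * Real.cos t) + IS))
      - (mi * mj / dij + mj * mk / d +
          mk * mi / Real.sqrt (dij ^ 2 + d ^ 2 - 2 * dij * d * Real.cos t)) := by
  funext t
  have hqnn : (0:ℝ) ≤ dij ^ 2 + d ^ 2 - 2 * dij * d * Real.cos t := by
    nlinarith [Real.cos_le_one t, sq_nonneg (dij - d), mul_pos hdij hd]
  simp only [amended, IH, dki, Real.sq_sqrt hqnn]

lemma hasDeriv_amended {mi mj mk IS H dij d : ℝ} (hmi : 0 < mi) (hmj : 0 < mj)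
    (hmk : 0 < mk) (hIS : 0 < IS) (hdij : 0 < dij) (hd : 0 < d) {t : ℝ}
    (ht : t ∈ Set.Ioo 0 Real.pi) :
    HasDerivAt (fun t => amended mi mj mk IS H dij d t)
      (F1fun mi mj mk IS H dij d t) t := by
  have hq := qpos hdij hd ht
  have hg := gpos hmi hmj hmk hIS hdij hd ht
  have hsq : 0 < Real.sqrt (dij ^ 2 + d ^ 2 - 2 * dij * d * Real.cos t) :=
    Real.sqrt_pos.mpr hq
  rw [amended_eq mi mj mk IS H dij d hdij hd]
  have hqd : HasDerivAt (fun x => dij ^ 2 + d ^ 2 - 2 * dij * d * Real.cos x)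
      (2 * dij * d * Real.sin t) t := by
    have h := ((Real.hasDerivAt_cos t).const_mul (2 * dij * d)).const_sub
      (dij ^ 2 + d ^ 2)
    exact h.congr_deriv (by ring)
  have hgd : HasDerivAt (fun x => mi * mj * dij ^ 2 + mj * mk * d ^ 2 +
      mk * mi * (dij ^ 2 + d ^ 2 - 2 * dij * d * Real.cos x) + IS)
      (mk * mi * (2 * dij * d * Real.sin t)) t :=
    ((hqd.const_mul (mk * mi)).const_add (mi * mj * dij ^ 2 + mj * mk * d ^ 2)).add_const IS
  have h1 := (hasDerivAt_const t (H ^ 2)).div (hgd.const_mul 2)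
    (by positivity)
  have hsd := hqd.sqrt (ne_of_gt hq)
  have h2 := (hasDerivAt_const t (mk * mi)).div hsd (ne_of_gt hsq)
  have h3 := h1.sub ((hasDerivAt_const t (mi * mj / dij + mj * mk / d)).add h2)
  refine h3.congr_deriv ?_
  rw [F1fun]
  have hss : Real.sqrt (dij ^ 2 + d ^ 2 - 2 * dij * d * Real.cos t) ^ 2
      = dij ^ 2 + d ^ 2 - 2 * dij * d * Real.cos t := Real.sq_sqrt hq.le
  rw [hss]
  field_simp
  ring

/-- Second variation in `θ` at an Isosceles relative equilibrium
(`d_jk = d_ki(θ*) = d`, i.e. `cos θ* = d_ij/(2d)`, with `H² = I_H(θ*)²/d³`):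
`d²𝓔/dθ²(θ*) = m_k m_i (m_k(m_i − 3m_j)d² − 3 m_i m_j d_ij² − 3 I_S)
(d_ij sin θ*)²/(I_H(θ*) d³)`; if moreover `m_j ≥ m_i` then this second
variation is strictly negative, so the Isosceles configurations are
energetically unstable in `θ`. -/
theorem isosceles_second_variation_unstable
    (mi mj mk IS H dij d θs : ℝ)
    (hmi : 0 < mi) (hmj : 0 < mj) (hmk : 0 < mk) (hIS : 0 < IS) (hH : 0 ≤ H)
    (hdij : 0 < dij) (hd : 0 < d) (hdd : dij < 2 * d)
    (hθs : θs ∈ Set.Ioo 0 Real.pi) (hcos : Real.cos θs = dij / (2 * d))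
    (hequil : H ^ 2 = (IH mi mj mk IS dij d θs) ^ 2 / d ^ 3) :
    deriv (deriv (fun t => amended mi mj mk IS H dij d t)) θs =
        mk * mi * (mk * (mi - 3 * mj) * d ^ 2 - 3 * mi * mj * dij ^ 2 - 3 * IS) *
          (dij * Real.sin θs) ^ 2 / (IH mi mj mk IS dij d θs * d ^ 3) ∧
      (mi ≤ mj →
        deriv (deriv (fun t => amended mi mj mk IS H dij d t)) θs < 0) := by
  have hs0 : 0 < Real.sin θs := Real.sin_pos_of_pos_of_lt_pi hθs.1 hθs.2
  have hq2 : dij ^ 2 + d ^ 2 - 2 * dij * d * Real.cos θs = d ^ 2 := by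
    rw [hcos]; field_simp; ring
  have hIHθ : IH mi mj mk IS dij d θs
      = mi * mj * dij ^ 2 + mj * mk * d ^ 2 + mk * mi * d ^ 2 + IS := by
    simp only [IH, dki]
    rw [hq2, Real.sq_sqrt (by positivity : (0:ℝ) ≤ d ^ 2)]
  have hGpos : 0 < IH mi mj mk IS dij d θs := by rw [hIHθ]; positivity
  have hev : deriv (fun t => amended mi mj mk IS H dij d t)
      =ᶠ[nhds θs] F1fun mi mj mk IS H dij d :=
    Filter.eventuallyEq_of_mem (isOpen_Ioo.mem_nhds hθs)
      (fun t ht => (hasDeriv_amended hmi hmj hmk hIS hdij hd ht).deriv)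
  have hdd2 : deriv (deriv (fun t => amended mi mj mk IS H dij d t)) θs
      = deriv (F1fun mi mj mk IS H dij d) θs := hev.deriv_eq
  have hq := qpos hdij hd hθs
  have hg := gpos hmi hmj hmk hIS hdij hd hθs
  have hsq : 0 < Real.sqrt (dij ^ 2 + d ^ 2 - 2 * dij * d * Real.cos θs) :=
    Real.sqrt_pos.mpr hq
  have hqd : HasDerivAt (fun x => dij ^ 2 + d ^ 2 - 2 * dij * d * Real.cos x)
      (2 * dij * d * Real.sin θs) θs := by
    have h := ((Real.hasDerivAt_cos θs).const_mul (2 * dij * d)).const_sub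
      (dij ^ 2 + d ^ 2)
    exact h.congr_deriv (by ring)
  have hgd : HasDerivAt (fun x => mi * mj * dij ^ 2 + mj * mk * d ^ 2 +
      mk * mi * (dij ^ 2 + d ^ 2 - 2 * dij * d * Real.cos x) + IS)
      (mk * mi * (2 * dij * d * Real.sin θs)) θs :=
    ((hqd.const_mul (mk * mi)).const_add
      (mi * mj * dij ^ 2 + mj * mk * d ^ 2)).add_const IS
  have hsd := hqd.sqrt (ne_of_gt hq)
  have hnum1 :=
    (((Real.hasDerivAt_sin θs).const_mul (2 * mk * mi * dij * d)).const_mul (H ^ 2)).neg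
  have hden1 := (hgd.pow 2).const_mul 2
  have hT1 := hnum1.div hden1 (by simp only [Pi.pow_apply]; positivity)
  have hnum2 := ((Real.hasDerivAt_sin θs).const_mul (dij * d)).const_mul (mk * mi)
  have hden2 := hqd.mul hsd
  have hT2 := hnum2.div hden2 (by simp only [Pi.mul_apply]; positivity)
  have hF : HasDerivAt (F1fun mi mj mk IS H dij d) _ θs := hT1.add hT2
  have hmain : deriv (deriv (fun t => amended mi mj mk IS H dij d t)) θs =
      mk * mi * (mk * (mi - 3 * mj) * d ^ 2 - 3 * mi * mj * dij ^ 2 - 3 * IS) *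
        (dij * Real.sin θs) ^ 2 / (IH mi mj mk IS dij d θs * d ^ 3) := by
    rw [hdd2, hF.deriv, hIHθ]
    simp only [Pi.pow_apply, Pi.mul_apply, Pi.neg_apply, Nat.cast_ofNat]
    have hH2 : H ^ 2 = (mi * mj * dij ^ 2 + mj * mk * d ^ 2 + mk * mi * d ^ 2 + IS) ^ 2
        / d ^ 3 := by rw [hequil, hIHθ]
    rw [hH2, hq2, Real.sqrt_sq hd.le, hcos]
    have hG0 : (0:ℝ) < mi * mj * dij ^ 2 + mj * mk * d ^ 2 + mk * mi * d ^ 2 + IS := by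
      positivity
    field_simp
    ring
  refine ⟨hmain, fun hle => ?_⟩
  rw [hmain]
  apply div_neg_of_neg_of_pos
  · have hN : mk * (mi - 3 * mj) * d ^ 2 - 3 * mi * mj * dij ^ 2 - 3 * IS < 0 := by
      nlinarith [mul_pos hmk hmj, mul_pos (mul_pos hmi hmj) (pow_pos hdij 2),
        mul_pos hmk (pow_pos hd 2)]
    have hP : 0 < (dij * Real.sin θs) ^ 2 := by positivity
    exact mul_neg_of_neg_of_pos (mul_neg_of_pos_of_neg (mul_pos hmk hmi) hN) hP
  · exact mul_pos hGpos (pow_pos hd 3)
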